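/- Let n ≥ 1 and k ∈ {0, 1, …, 2^n + n}. Every ternary decision tree over {0,u,1}^{n+2^n} that outputs the value of the hazard-free extension of MUX_n on every input having at most k coordinates equal to u has depth at least min(2^k + n, 2^n + n), and there exists such a tree of depth exactly min(2^k + n, 2^n + n). -/

import Mathlib

attribute [local instance 0] Classical.propDecidable

/-- Ternary values: `none` represents the uncertain value `u`,
`some b` represents the Boolean value `b`. -/
abbrev TVal := Option Bool

/-- The resolutions of `x ∈ {0,u,1}^ι`: all Boolean strings agreeing with
the determined coordinates of `x`. -/
def Res {ι : Type} (x : ι → Option Bool) : Set (ι → Bool) :=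
  {y | ∀ i b, x i = some b → y i = b}

/-- The hazard-free extension of a Boolean function `f`. -/
noncomputable def hfext {ι : Type} (f : (ι → Bool) → Bool) (x : ι → Option Bool) :
    Option Bool :=
  if ∀ y ∈ Res x, f y = true then some true
  else if ∀ y ∈ Res x, f y = false then some false
  else none

/-- Number of uncertain (`u`) coordinates of `x`. -/
noncomputable def uCount {ι : Type} [Fintype ι] (x : ι → Option Bool) : ℕ :=
  (Finset.univ.filter fun i : ι => x i = none).card

/-- u-sensitivity of `f` at `x`: the number of coordinates `i` such that
changing only coordinate `i` can change the value of the hazard-free extension. -/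
noncomputable def sensAt {ι : Type} [Fintype ι] (f : (ι → Bool) → Bool)
    (x : ι → Option Bool) : ℕ :=
  (Finset.univ.filter fun i : ι => ∃ y : ι → Option Bool,
      y i ≠ x i ∧ (∀ j, j ≠ i → y j = x j) ∧ hfext f y ≠ hfext f x).card

/-- u-sensitivity of `f`. -/
noncomputable def sensU {ι : Type} [Fintype ι] [DecidableEq ι]
    (f : (ι → Bool) → Bool) : ℕ :=
  Finset.univ.sup fun x : ι → Option Bool => sensAt f x

/-- u-sensitivity of `f` restricted to inputs whose hazard-free value is `b`. -/
noncomputable def sensULevel {ι : Type} [Fintype ι] [DecidableEq ι]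
    (f : (ι → Bool) → Bool) (b : Option Bool) : ℕ :=
  (Finset.univ.filter fun x : ι → Option Bool => hfext f x = b).sup (sensAt f)

/-- Boolean sensitivity of `f` at a Boolean input `x`. -/
noncomputable def boolSensAt {ι : Type} [Fintype ι] [DecidableEq ι]
    (f : (ι → Bool) → Bool) (x : ι → Bool) : ℕ :=
  (Finset.univ.filter fun i : ι => f (Function.update x i (!x i)) ≠ f x).card

/-- Boolean sensitivity of `f`. -/
noncomputable def boolSens {ι : Type} [Fintype ι] [DecidableEq ι]
    (f : (ι → Bool) → Bool) : ℕ :=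
  Finset.univ.sup (boolSensAt f)

/-- There are `k` pairwise disjoint blocks, each of which is sensitive for the
hazard-free extension of `f` at `x`. -/
def HasSensBlocks {ι : Type} (f : (ι → Bool) → Bool) (x : ι → Option Bool)
    (k : ℕ) : Prop :=
  ∃ (B : Fin k → Set ι) (y : Fin k → ι → Option Bool),
    (∀ j j', j ≠ j' → Disjoint (B j) (B j')) ∧
    ∀ j, (∀ i, y j i ≠ x i ↔ i ∈ B j) ∧ hfext f (y j) ≠ hfext f x

/-- u-block sensitivity of `f`. -/
noncomputable def bsU {ι : Type} (f : (ι → Bool) → Bool) : ℕ :=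
  sSup {k | ∃ x, HasSensBlocks f x k}

/-- A ternary string `y` is consistent with a partial assignment
`p : ι → Option (Option Bool)` (`none` = `*`). -/
def Consistent {ι : Type} (y : ι → Option Bool) (p : ι → Option (Option Bool)) :
    Prop :=
  ∀ i v, p i = some v → y i = v

/-- `p` is a certificate for the hazard-free extension of `f` at `x`. -/
def IsCert {ι : Type} (f : (ι → Bool) → Bool) (x : ι → Option Bool)
    (p : ι → Option (Option Bool)) : Prop :=
  Consistent x p ∧ ∀ y, Consistent y p → hfext f y = hfext f x

/-- Size of a partial assignment: the number of non-`*` coordinates. -/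
noncomputable def certSize {ι : Type} [Fintype ι] (p : ι → Option (Option Bool)) :
    ℕ :=
  (Finset.univ.filter fun i : ι => p i ≠ none).card

/-- u-certificate complexity of `f` at `x`. -/
noncomputable def ccAt {ι : Type} [Fintype ι] (f : (ι → Bool) → Bool)
    (x : ι → Option Bool) : ℕ :=
  sInf {k | ∃ p, IsCert f x p ∧ certSize p = k}

/-- u-certificate complexity of `f`. -/
noncomputable def ccU {ι : Type} [Fintype ι] [DecidableEq ι]
    (f : (ι → Bool) → Bool) : ℕ :=
  Finset.univ.sup fun x : ι → Option Bool => ccAt f x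

/-- u-certificate complexity of `f` restricted to inputs with hazard-free value `b`. -/
noncomputable def ccULevel {ι : Type} [Fintype ι] [DecidableEq ι]
    (f : (ι → Bool) → Bool) (b : Option Bool) : ℕ :=
  (Finset.univ.filter fun x : ι → Option Bool => hfext f x = b).sup (ccAt f)

/-- A set of literals (at most one per variable), encoded as a partial Boolean
assignment `q : ι → Option Bool`, is an implicant of `f` if `f` is `true` on
every Boolean input extending `q`. -/
def IsImplicant {ι : Type} (f : (ι → Bool) → Bool) (q : ι → Option Bool) : Prop :=
  ∀ y : ι → Bool, (∀ i b, q i = some b → y i = b) → f y = true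

/-- Dually, an implicate of `f` forces the value `false`. -/
def IsImplicate {ι : Type} (f : (ι → Bool) → Bool) (q : ι → Option Bool) : Prop :=
  ∀ y : ι → Bool, (∀ i b, q i = some b → y i = b) → f y = false

/-- `q'` is a (literal-)subset of `q`. -/
def SubAsn {ι : Type} (q' q : ι → Option Bool) : Prop :=
  ∀ i b, q' i = some b → q i = some b

def IsPrimeImplicant {ι : Type} (f : (ι → Bool) → Bool) (q : ι → Option Bool) :
    Prop :=
  IsImplicant f q ∧ ∀ q', SubAsn q' q → q' ≠ q → ¬ IsImplicant f q'

def IsPrimeImplicate {ι : Type} (f : (ι → Bool) → Bool) (q : ι → Option Bool) :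
    Prop :=
  IsImplicate f q ∧ ∀ q', SubAsn q' q → q' ≠ q → ¬ IsImplicate f q'

/-- Number of literals of a partial assignment. -/
noncomputable def asnSize {ι : Type} [Fintype ι] (q : ι → Option Bool) : ℕ :=
  (Finset.univ.filter fun i : ι => q i ≠ none).card

/-- Ternary decision trees: internal nodes query a variable and branch on the
three possible values `0`, `u`, `1`; leaves output a value in `{0,u,1}`. -/
inductive TTree (ι : Type) : Type where
  | leaf : Option Bool → TTree ι
  | node : ι → TTree ι → TTree ι → TTree ι → TTree ι

namespace TTree

def eval {ι : Type} : TTree ι → (ι → Option Bool) → Option Bool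
  | .leaf b, _ => b
  | .node i t0 tu t1, x =>
    match x i with
    | some false => eval t0 x
    | none => eval tu x
    | some true => eval t1 x

def depth {ι : Type} : TTree ι → ℕ
  | .leaf _ => 0
  | .node _ t0 tu t1 => max (max t0.depth tu.depth) t1.depth + 1

/-- Size of a tree: its number of leaves. -/
def size {ι : Type} : TTree ι → ℕ
  | .leaf _ => 1
  | .node _ t0 tu t1 => t0.size + tu.size + t1.size

end TTree

/-- Boolean decision trees. -/
inductive BTree (ι : Type) : Type where
  | leaf : Bool → BTree ι
  | node : ι → BTree ι → BTree ι → BTree ι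

namespace BTree

def eval {ι : Type} : BTree ι → (ι → Bool) → Bool
  | .leaf b, _ => b
  | .node i t0 t1, x => if x i then eval t1 x else eval t0 x

def depth {ι : Type} : BTree ι → ℕ
  | .leaf _ => 0
  | .node _ t0 t1 => max t0.depth t1.depth + 1

/-- Size of a tree: its number of leaves. -/
def size {ι : Type} : BTree ι → ℕ
  | .leaf _ => 1
  | .node _ t0 t1 => t0.size + t1.size

end BTree

/-- Deterministic u-query complexity: minimal depth of a ternary decision tree
computing the hazard-free extension of `f`. -/
noncomputable def Du {ι : Type} (f : (ι → Bool) → Bool) : ℕ :=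
  sInf {d | ∃ T : TTree ι, (∀ x, T.eval x = hfext f x) ∧ T.depth = d}

/-- Minimal number of leaves of a ternary decision tree computing the
hazard-free extension of `f`. -/
noncomputable def sizeU {ι : Type} (f : (ι → Bool) → Bool) : ℕ :=
  sInf {s | ∃ T : TTree ι, (∀ x, T.eval x = hfext f x) ∧ T.size = s}

/-- Deterministic (Boolean) query complexity of `f`. -/
noncomputable def Dbool {ι : Type} (f : (ι → Bool) → Bool) : ℕ :=
  sInf {d | ∃ T : BTree ι, (∀ x, T.eval x = f x) ∧ T.depth = d}

/-- Minimal number of leaves of a Boolean decision tree computing `f`. -/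
noncomputable def sizeBool {ι : Type} (f : (ι → Bool) → Bool) : ℕ :=
  sInf {s | ∃ T : BTree ι, (∀ x, T.eval x = f x) ∧ T.size = s}

/-- Index type for `MUX_n`: `n` selector bits and `2^n` data bits. -/
abbrev MUXIdx (n : ℕ) := Fin n ⊕ (Fin n → Bool)

/-- The multiplexer function: output the data bit addressed by the selector bits. -/
def MUX (n : ℕ) (z : MUXIdx n → Bool) : Bool :=
  z (Sum.inr fun i => z (Sum.inl i))


/-! ### Auxiliary development for `stmt10` -/

namespace Stmt10Aux

open Finset

variable {n : ℕ}

/-- selector-consistency of an address with a ternary input -/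
def CS (x : MUXIdx n → Option Bool) (a : Fin n → Bool) : Prop :=
  ∀ j b, x (Sum.inl j) = some b → a j = b

lemma key (x : MUXIdx n → Option Bool) (b : Bool) :
    (∀ y ∈ Res x, MUX n y = b) ↔ (∀ a, CS x a → x (Sum.inr a) = some b) := by
  constructor
  · intro h a ha
    by_contra hne
    set y : MUXIdx n → Bool :=
      Sum.elim a (fun a' => (x (Sum.inr a')).getD (!b)) with hy
    have hyR : y ∈ Res x := by
      intro i c hc
      cases i with
      | inl j => simpa [hy] using ha j c hc
      | inr a' => simp [hy, hc]
    have hm := h y hyR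
    have haddr : (fun i => y (Sum.inl i)) = a := rfl
    unfold MUX at hm
    rw [haddr] at hm
    have hval : y (Sum.inr a) = (x (Sum.inr a)).getD (!b) := rfl
    rw [hval] at hm
    rcases hx : x (Sum.inr a) with _ | c
    · rw [hx] at hm; simp at hm
    · rw [hx] at hm
      simp only [Option.getD_some] at hm
      subst hm
      exact hne hx
  · intro h y hy
    have hcs : CS x (fun i => y (Sum.inl i)) := fun j c hc => hy _ c hc
    have := h _ hcs
    exact hy _ b this

lemma hfext_MUX (x : MUXIdx n → Option Bool) :
    hfext (MUX n) x =
      if ∀ a, CS x a → x (Sum.inr a) = some true then some true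
      else if ∀ a, CS x a → x (Sum.inr a) = some false then some false
      else none := by
  unfold hfext
  by_cases h1 : ∀ a, CS x a → x (Sum.inr a) = some true
  · rw [if_pos ((key x true).mpr h1), if_pos h1]
  · rw [if_neg (fun h => h1 ((key x true).mp h)), if_neg h1]
    by_cases h2 : ∀ a, CS x a → x (Sum.inr a) = some false
    · rw [if_pos ((key x false).mpr h2), if_pos h2]
    · rw [if_neg (fun h => h2 ((key x false).mp h)), if_neg h2]

lemma hf_false {x : MUXIdx n → Option Bool}
    (h2 : ∀ a, CS x a → x (Sum.inr a) = some false)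
    (a₀ : Fin n → Bool) (h₀ : CS x a₀) : hfext (MUX n) x = some false := by
  rw [hfext_MUX, if_neg, if_pos h2]
  intro h1
  have e1 := h1 a₀ h₀
  have e2 := h2 a₀ h₀
  rw [e1] at e2
  simp at e2

lemma hf_ne_false {x : MUXIdx n → Option Bool} (a : Fin n → Bool) (hCS : CS x a)
    (ht : x (Sum.inr a) = some true) : hfext (MUX n) x ≠ some false := by
  rw [hfext_MUX]
  split_ifs with h1 h2
  · simp
  · have := h2 a hCS; rw [ht] at this; simp at this
  · simp

lemma card_cone (s : Fin n → Option Bool) :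
    (Finset.univ.filter fun a : Fin n → Bool => ∀ j b, s j = some b → a j = b).card
      = 2 ^ (Finset.univ.filter fun j : Fin n => s j = none).card := by
  classical
  have e : {a : Fin n → Bool // ∀ j b, s j = some b → a j = b}
      ≃ ({j : Fin n // s j = none} → Bool) :=
    { toFun := fun a j => a.1 j.1
      invFun := fun f => ⟨fun j => (s j).getD (if h : s j = none then f ⟨j, h⟩ else true), by
        intro j b hb; simp [hb]⟩
      left_inv := by
        intro a; ext j
        rcases hs : s j with _ | b
        · simp [hs]
        · simpa [hs] using (a.2 j b hs).symm
      right_inv := by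
        intro f; funext j
        have hj := j.2
        simp [hj] }
  rw [← Fintype.card_subtype, ← Fintype.card_subtype, Fintype.card_congr e,
    Fintype.card_fun, Fintype.card_bool]

lemma card_filter_lt {m : ℕ} (hm : m ≤ n) :
    (Finset.univ.filter fun j : Fin n => (j : ℕ) < m).card = m := by
  have himg : (Finset.univ.filter fun j : Fin n => (j : ℕ) < m).image Fin.val
      = Finset.range m := by
    ext x
    simp only [Finset.mem_image, Finset.mem_filter, Finset.mem_univ, true_and,
      Finset.mem_range]
    constructor
    · rintro ⟨j, hj, rfl⟩; exact hj
    · intro hx; exact ⟨⟨x, lt_of_lt_of_le hx hm⟩, hx, rfl⟩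
  calc (Finset.univ.filter fun j : Fin n => (j : ℕ) < m).card
      = ((Finset.univ.filter fun j : Fin n => (j : ℕ) < m).image Fin.val).card :=
        (Finset.card_image_of_injective _ Fin.val_injective).symm
    _ = m := by rw [himg, Finset.card_range]

lemma selcard_le_uCount (x : MUXIdx n → Option Bool) :
    ((Finset.univ : Finset (Fin n)).filter fun j => x (Sum.inl j) = none).card ≤ uCount x := by
  unfold uCount
  apply Finset.card_le_card_of_injOn Sum.inl
  · intro j hj
    simp only [Finset.coe_filter, Finset.mem_coe, Finset.mem_filter, Finset.mem_univ, true_and, Set.mem_setOf_eq] at hj ⊢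
    exact hj
  · exact fun a _ b _ h => Sum.inl_injective h

/-! ### Upper bound construction -/

def dataTree : List (Fin n → Bool) → (List (Option Bool) → Option Bool) → TTree (MUXIdx n)
  | [], g => .leaf (g [])
  | a :: L, g => .node (Sum.inr a)
      (dataTree L fun ans => g (some false :: ans))
      (dataTree L fun ans => g (none :: ans))
      (dataTree L fun ans => g (some true :: ans))

lemma dataTree_eval (L : List (Fin n → Bool)) (g : List (Option Bool) → Option Bool)
    (x : MUXIdx n → Option Bool) :
    (dataTree L g).eval x = g (L.map fun a => x (Sum.inr a)) := by
  induction L generalizing g with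
  | nil => rfl
  | cons a L ih =>
    rcases hx : x (Sum.inr a) with _ | b
    · simp [dataTree, TTree.eval, hx, ih]
    · cases b <;> simp [dataTree, TTree.eval, hx, ih]

lemma dataTree_depth (L : List (Fin n → Bool)) (g : List (Option Bool) → Option Bool) :
    (dataTree L g).depth = L.length := by
  induction L generalizing g with
  | nil => rfl
  | cons a L ih => simp [dataTree, TTree.depth, ih]

def selTree : List (Fin n) → ((Fin n → Option Bool) → TTree (MUXIdx n)) →
    (Fin n → Option Bool) → TTree (MUXIdx n)
  | [], g, s => g s
  | j :: L, g, s => .node (Sum.inl j)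
      (selTree L g (Function.update s j (some false)))
      (selTree L g (Function.update s j none))
      (selTree L g (Function.update s j (some true)))

lemma selTree_eval (L : List (Fin n)) (g : (Fin n → Option Bool) → TTree (MUXIdx n))
    (x : MUXIdx n → Option Bool) : ∀ s,
    (selTree L g s).eval x = (g fun j => if j ∈ L then x (Sum.inl j) else s j).eval x := by
  induction L with
  | nil =>
    intro s
    have h : (fun j => if j ∈ ([] : List (Fin n)) then x (Sum.inl j) else s j) = s := by
      funext j; simp
    rw [h]; rfl
  | cons j L ih =>
    intro s
    have hfun : ∀ v : Option Bool, x (Sum.inl j) = v →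
        (fun j' => if j' ∈ L then x (Sum.inl j') else Function.update s j v j')
          = fun j' => if j' ∈ j :: L then x (Sum.inl j') else s j' := by
      intro v hv; funext j'
      by_cases hL : j' ∈ L
      · simp [hL]
      · by_cases hj : j' = j
        · subst hj; simp [hL, ← hv]
        · simp [hL, hj, Function.update_of_ne hj]
    rcases hx : x (Sum.inl j) with _ | b
    · show TTree.eval _ x = _
      simp only [selTree, TTree.eval, hx]
      rw [ih, hfun none hx]
    · cases b
      · show TTree.eval _ x = _
        simp only [selTree, TTree.eval, hx]
        rw [ih, hfun (some false) hx]
      · show TTree.eval _ x = _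
        simp only [selTree, TTree.eval, hx]
        rw [ih, hfun (some true) hx]

lemma selTree_depth_le (L : List (Fin n)) (g : (Fin n → Option Bool) → TTree (MUXIdx n))
    (D : ℕ) (hg : ∀ s, (g s).depth ≤ D) :
    ∀ s, (selTree L g s).depth ≤ L.length + D := by
  induction L with
  | nil => intro s; simpa [selTree] using hg s
  | cons j L ih =>
    intro s
    have h1 := ih (Function.update s j (some false))
    have h2 := ih (Function.update s j none)
    have h3 := ih (Function.update s j (some true))
    have hmax : max (max (selTree L g (Function.update s j (some false))).depth
        (selTree L g (Function.update s j none)).depth)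
        (selTree L g (Function.update s j (some true))).depth ≤ L.length + D :=
      max_le (max_le h1 h2) h3
    simp only [selTree, TTree.depth, List.length_cons]
    omega

lemma selTree_depth_ge (L : List (Fin n)) (g : (Fin n → Option Bool) → TTree (MUXIdx n))
    (f : Fin n → Option Bool) : ∀ s,
    L.length + (g fun j => if j ∈ L then f j else s j).depth ≤ (selTree L g s).depth := by
  induction L with
  | nil =>
    intro s
    have h : (fun j => if j ∈ ([] : List (Fin n)) then f j else s j) = s := by
      funext j; simp
    rw [h]; simp [selTree]
  | cons j L ih =>
    intro s
    have hfe : (fun j' => if j' ∈ L then f j' else Function.update s j (f j) j')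
        = fun j' => if j' ∈ j :: L then f j' else s j' := by
      funext j'
      by_cases hL : j' ∈ L
      · simp [hL]
      · by_cases hj : j' = j
        · subst hj; simp [hL]
        · simp [hL, hj, Function.update_of_ne hj]
    have hch := ih (Function.update s j (f j))
    rw [hfe] at hch
    have hle : (selTree L g (Function.update s j (f j))).depth ≤
        max (max (selTree L g (Function.update s j (some false))).depth
          (selTree L g (Function.update s j none)).depth)
          (selTree L g (Function.update s j (some true))).depth := by
      rcases hfj : f j with _ | b
      · exact le_max_of_le_left (le_max_right _ _)
      · cases b
        · exact le_max_of_le_left (le_max_left _ _)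
        · exact le_max_right _ _
    simp only [selTree, TTree.depth, List.length_cons]
    omega

noncomputable def gfun (n k : ℕ) (s : Fin n → Option Bool) : TTree (MUXIdx n) :=
  if (Finset.univ.filter fun j : Fin n => s j = none).card ≤ k then
    dataTree ((Finset.univ.filter fun a : Fin n → Bool => ∀ j b, s j = some b → a j = b).toList)
      (fun L => if ∀ v ∈ L, v = some true then some true
                else if ∀ v ∈ L, v = some false then some false else none)
  else .leaf none

noncomputable def UT (n k : ℕ) : TTree (MUXIdx n) :=
  selTree (List.finRange n) (gfun n k) (fun _ => none)

lemma UT_correct (n k : ℕ) (x : MUXIdx n → Option Bool) (hx : uCount x ≤ k) :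
    (UT n k).eval x = hfext (MUX n) x := by
  unfold UT
  rw [selTree_eval]
  have hs : (fun j => if j ∈ List.finRange n then x (Sum.inl j) else (none : Option Bool))
      = fun j => x (Sum.inl j) := by
    funext j; simp [List.mem_finRange]
  rw [hs]
  have hcard : (Finset.univ.filter fun j : Fin n => x (Sum.inl j) = none).card ≤ k :=
    le_trans (selcard_le_uCount x) hx
  unfold gfun
  rw [if_pos hcard, dataTree_eval, hfext_MUX]
  have hmem : ∀ b : Bool,
      (∀ v ∈ (Finset.univ.filter fun a : Fin n → Bool =>
          ∀ j c, x (Sum.inl j) = some c → a j = c).toList.map fun a => x (Sum.inr a),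
        v = some b) ↔ (∀ a, CS x a → x (Sum.inr a) = some b) := by
    intro b
    constructor
    · intro h a ha
      exact h _ (List.mem_map.mpr ⟨a, Finset.mem_toList.mpr
        (Finset.mem_filter.mpr ⟨Finset.mem_univ _, ha⟩), rfl⟩)
    · intro h v hv
      obtain ⟨a, haL, rfl⟩ := List.mem_map.mp hv
      exact h a ((Finset.mem_filter.mp (Finset.mem_toList.mp haL)).2)
  by_cases h1 : ∀ a, CS x a → x (Sum.inr a) = some true
  · rw [if_pos ((hmem true).mpr h1), if_pos h1]
  · rw [if_neg (fun h => h1 ((hmem true).mp h)), if_neg h1]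
    by_cases h2 : ∀ a, CS x a → x (Sum.inr a) = some false
    · rw [if_pos ((hmem false).mpr h2), if_pos h2]
    · rw [if_neg (fun h => h2 ((hmem false).mp h)), if_neg h2]

lemma gfun_depth_special (n k : ℕ) :
    (gfun n k (fun j : Fin n => if (j : ℕ) < min k n then none else some false)).depth
      = 2 ^ min k n := by
  have hW : (Finset.univ.filter fun j : Fin n =>
      (if (j : ℕ) < min k n then (none : Option Bool) else some false) = none).card
        = min k n := by
    have he : (Finset.univ.filter fun j : Fin n =>
        (if (j : ℕ) < min k n then (none : Option Bool) else some false) = none)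
          = Finset.univ.filter fun j : Fin n => (j : ℕ) < min k n := by
      ext j
      by_cases hj : (j : ℕ) < min k n <;> simp [hj]
    rw [he, card_filter_lt (min_le_right k n)]
  simp only [gfun]
  rw [if_pos (by rw [hW]; exact min_le_left k n), dataTree_depth,
    Finset.length_toList, card_cone, hW]

lemma UT_depth (n k : ℕ) : (UT n k).depth = n + 2 ^ min k n := by
  apply le_antisymm
  · have hg : ∀ s, (gfun n k s).depth ≤ 2 ^ min k n := by
      intro s
      unfold gfun
      split_ifs with h
      · rw [dataTree_depth, Finset.length_toList, card_cone]
        have hn' : (Finset.univ.filter fun j : Fin n => s j = none).card ≤ n := by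
          calc (Finset.univ.filter fun j : Fin n => s j = none).card
              ≤ (Finset.univ : Finset (Fin n)).card := Finset.card_filter_le _ _
            _ = n := by simp
        exact Nat.pow_le_pow_right (by norm_num) (le_min h hn')
      · exact Nat.zero_le _
    have := selTree_depth_le (List.finRange n) (gfun n k) (2 ^ min k n) hg (fun _ => none)
    simpa [List.length_finRange, UT] using this
  · have hf := selTree_depth_ge (List.finRange n) (gfun n k)
      (fun j => if (j : ℕ) < min k n then none else some false) (fun _ => none)
    simp only [List.mem_finRange, if_true, List.length_finRange] at hf
    rw [gfun_depth_special n k] at hf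
    unfold UT
    omega

lemma min_pow (n k : ℕ) : min (2 ^ k + n) (2 ^ n + n) = 2 ^ min k n + n := by
  rcases le_total k n with h | h
  · rw [min_eq_left h, min_eq_left (Nat.add_le_add_right
      (Nat.pow_le_pow_right (by norm_num) h) n)]
  · rw [min_eq_right h, min_eq_right (Nat.add_le_add_right
      (Nat.pow_le_pow_right (by norm_num) h) n)]

/-! ### Lower bound -/

noncomputable def selU (p : MUXIdx n → Option (Option Bool)) : Finset (Fin n) :=
  Finset.univ.filter fun j => p (Sum.inl j) = some none

noncomputable def PP (p : MUXIdx n → Option (Option Bool)) : Finset (Fin n → Bool) :=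
  Finset.univ.filter fun a => ∀ j b, p (Sum.inl j) = some (some b) → a j = b

lemma mem_PP {p : MUXIdx n → Option (Option Bool)} {a : Fin n → Bool} :
    a ∈ PP p ↔ ∀ j b, p (Sum.inl j) = some (some b) → a j = b := by
  simp [PP]

/-- Invariant of the adversary state. -/
def Inv (k : ℕ) (p : MUXIdx n → Option (Option Bool)) : Prop :=
  (selU p).card ≤ min k n ∧
  ((∃ j b, p (Sum.inl j) = some (some b)) → (selU p).card = min k n) ∧
  (∀ a v, p (Sum.inr a) = some v → v ≠ none) ∧
  (((∃ a ∈ PP p, p (Sum.inr a) = none) ∧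
     ∀ a ∈ PP p, ∀ v, p (Sum.inr a) = some v → v = some false) ∨
   (∃ a₀ ∈ PP p, p (Sum.inr a₀) = some (some true) ∧
     ∀ a ∈ PP p, a ≠ a₀ → p (Sum.inr a) = some (some false)))

def cmpl (p : MUXIdx n → Option (Option Bool)) (a₀ : Fin n → Bool) :
    MUXIdx n → Option Bool :=
  Sum.elim (fun j => (p (Sum.inl j)).getD (some (a₀ j)))
           (fun a => (p (Sum.inr a)).getD (some false))

lemma cmpl_inl (p : MUXIdx n → Option (Option Bool)) (a₀ : Fin n → Bool) (j : Fin n) :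
    cmpl p a₀ (Sum.inl j) = (p (Sum.inl j)).getD (some (a₀ j)) := rfl

lemma cmpl_inr (p : MUXIdx n → Option (Option Bool)) (a₀ a : Fin n → Bool) :
    cmpl p a₀ (Sum.inr a) = (p (Sum.inr a)).getD (some false) := rfl

lemma cmpl_cons (p : MUXIdx n → Option (Option Bool)) (a₀ : Fin n → Bool) :
    Consistent (cmpl p a₀) p := by
  intro i v hv; cases i <;> simp [cmpl, hv]

lemma cmpl_inl_none_iff (p : MUXIdx n → Option (Option Bool)) (a₀ : Fin n → Bool)
    (j : Fin n) : cmpl p a₀ (Sum.inl j) = none ↔ p (Sum.inl j) = some none := by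
  rcases hp : p (Sum.inl j) with _ | v
  · simp [cmpl, hp]
  · rcases v with _ | b <;> simp [cmpl, hp]

lemma cmpl_inr_ne_none (p : MUXIdx n → Option (Option Bool)) (a₀ a : Fin n → Bool)
    (h3 : ∀ a v, p (Sum.inr a) = some v → v ≠ none) :
    cmpl p a₀ (Sum.inr a) ≠ none := by
  rcases hp : p (Sum.inr a) with _ | v
  · simp [cmpl, hp]
  · simpa [cmpl, hp] using h3 a v hp

lemma cmpl_CS (p : MUXIdx n → Option (Option Bool)) (a₀ : Fin n → Bool)
    (ha₀ : ∀ j b, p (Sum.inl j) = some (some b) → a₀ j = b) :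
    CS (cmpl p a₀) a₀ := by
  intro j b hb
  rcases hp : p (Sum.inl j) with _ | v
  · rw [cmpl_inl, hp] at hb; simpa using hb
  · rcases v with _ | c
    · rw [cmpl_inl, hp] at hb; simp at hb
    · rw [cmpl_inl, hp] at hb
      simp only [Option.getD_some] at hb
      have hcb : c = b := Option.some_injective _ hb
      rw [← hcb]
      exact ha₀ j c hp

lemma uCount_eq_selU (p : MUXIdx n → Option (Option Bool)) (x : MUXIdx n → Option Bool)
    (h1 : ∀ j, (x (Sum.inl j) = none ↔ p (Sum.inl j) = some none))
    (h2 : ∀ a, x (Sum.inr a) ≠ none) :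
    uCount x = (selU p).card := by
  unfold uCount selU
  have he : (Finset.univ.filter fun i : MUXIdx n => x i = none)
      = (Finset.univ.filter fun j : Fin n => p (Sum.inl j) = some none).map
          ⟨Sum.inl, Sum.inl_injective⟩ := by
    ext i
    cases i with
    | inl j =>
      simp only [Finset.mem_filter, Finset.mem_univ, true_and, Finset.mem_map,
        Function.Embedding.coeFn_mk]
      constructor
      · intro h; exact ⟨j, (h1 j).mp h, rfl⟩
      · rintro ⟨j', hj', hje⟩
        obtain rfl := Sum.inl_injective hje
        exact (h1 j').mpr hj'
    | inr a =>
      simp only [Finset.mem_filter, Finset.mem_univ, true_and, Finset.mem_map,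
        Function.Embedding.coeFn_mk]
      constructor
      · intro h; exact absurd h (h2 a)
      · rintro ⟨j', _, hje⟩; exact nomatch hje
  rw [he, Finset.card_map]

lemma certSize_update (p : MUXIdx n → Option (Option Bool)) (i : MUXIdx n)
    (hp : p i = none) (v : Option Bool) :
    certSize (Function.update p i (some v)) = certSize p + 1 := by
  unfold certSize
  have he : (Finset.univ.filter fun i' : MUXIdx n => Function.update p i (some v) i' ≠ none)
      = insert i (Finset.univ.filter fun i' : MUXIdx n => p i' ≠ none) := by
    ext i'
    simp only [Finset.mem_filter, Finset.mem_univ, true_and, Finset.mem_insert]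
    by_cases hi : i' = i
    · subst hi; simp
    · simp [Function.update_of_ne hi, hi]
  rw [he, Finset.card_insert_of_notMem (by simp [hp])]

lemma selU_update_inr (p : MUXIdx n → Option (Option Bool)) (a : Fin n → Bool)
    (v : Option (Option Bool)) : selU (Function.update p (Sum.inr a) v) = selU p := by
  ext j
  simp [selU, Function.update_of_ne (show (Sum.inl j : MUXIdx n) ≠ Sum.inr a by simp)]

lemma PP_update_inr (p : MUXIdx n → Option (Option Bool)) (a : Fin n → Bool)
    (v : Option (Option Bool)) : PP (Function.update p (Sum.inr a) v) = PP p := by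
  ext a'
  simp only [mem_PP]
  constructor
  · intro h j b hb
    exact h j b (by rw [Function.update_of_ne (by simp)]; exact hb)
  · intro h j b hb
    rw [Function.update_of_ne (by simp)] at hb
    exact h j b hb

lemma selU_update_inl_u (p : MUXIdx n → Option (Option Bool)) (j : Fin n)
    (hp : p (Sum.inl j) = none) :
    selU (Function.update p (Sum.inl j) (some none)) = insert j (selU p) := by
  ext j'
  simp only [selU, Finset.mem_filter, Finset.mem_univ, true_and, Finset.mem_insert]
  by_cases hj : j' = j
  · subst hj; simp
  · simp [Function.update_of_ne (show (Sum.inl j' : MUXIdx n) ≠ Sum.inl j by simp [hj]), hj]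

lemma selU_update_inl_bool (p : MUXIdx n → Option (Option Bool)) (j : Fin n)
    (hp : p (Sum.inl j) = none) (b : Bool) :
    selU (Function.update p (Sum.inl j) (some (some b))) = selU p := by
  ext j'
  simp only [selU, Finset.mem_filter, Finset.mem_univ, true_and]
  by_cases hj : j' = j
  · subst hj; simp [hp]
  · rw [Function.update_of_ne (show (Sum.inl j' : MUXIdx n) ≠ Sum.inl j by simp [hj])]

lemma PP_update_inl_u (p : MUXIdx n → Option (Option Bool)) (j : Fin n)
    (hp : p (Sum.inl j) = none) :
    PP (Function.update p (Sum.inl j) (some none)) = PP p := by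
  ext a
  simp only [mem_PP]
  constructor
  · intro h j' b hb
    have hj : j' ≠ j := by rintro rfl; rw [hp] at hb; exact nomatch hb
    exact h j' b (by
      rw [Function.update_of_ne (show (Sum.inl j' : MUXIdx n) ≠ Sum.inl j by simp [hj])]
      exact hb)
  · intro h j' b hb
    by_cases hj : j' = j
    · subst hj; rw [Function.update_self] at hb; simp at hb
    · rw [Function.update_of_ne (show (Sum.inl j' : MUXIdx n) ≠ Sum.inl j by simp [hj])] at hb
      exact h j' b hb

lemma mem_PP_update_inl_bool (p : MUXIdx n → Option (Option Bool)) (j : Fin n)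
    (hp : p (Sum.inl j) = none) (b : Bool) (a : Fin n → Bool) :
    a ∈ PP (Function.update p (Sum.inl j) (some (some b))) ↔ a ∈ PP p ∧ a j = b := by
  simp only [mem_PP]
  constructor
  · intro h
    refine ⟨fun j' b' hb' => ?_, h j b (by rw [Function.update_self])⟩
    have hj : j' ≠ j := by rintro rfl; rw [hp] at hb'; exact nomatch hb'
    exact h j' b' (by
      rw [Function.update_of_ne (show (Sum.inl j' : MUXIdx n) ≠ Sum.inl j by simp [hj])]
      exact hb')
  · rintro ⟨hPa, hab⟩ j' b' hb'
    by_cases hj : j' = j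
    · subst hj
      rw [Function.update_self] at hb'
      have hbb : b = b' := by simpa using hb'
      rw [← hbb]; exact hab
    · rw [Function.update_of_ne (show (Sum.inl j' : MUXIdx n) ≠ Sum.inl j by simp [hj])] at hb'
      exact hPa j' b' hb'

lemma eval_node_cons {i : MUXIdx n} {t0 tu t1 : TTree (MUXIdx n)}
    {x : MUXIdx n → Option Bool} {v : Option Bool} (hx : x i = v) :
    (TTree.node i t0 tu t1).eval x =
      (match v with | some false => t0 | none => tu | some true => t1).eval x := by
  rcases v with _ | b
  · simp [TTree.eval, hx]
  · cases b <;> simp [TTree.eval, hx]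

lemma depth_child_le (i : MUXIdx n) (t0 tu t1 : TTree (MUXIdx n)) (v : Option Bool) :
    (match v with | some false => t0 | none => tu | some true => t1).depth + 1
      ≤ (TTree.node i t0 tu t1).depth := by
  have h1 := le_max_left (max t0.depth tu.depth) t1.depth
  have h2 := le_max_right (max t0.depth tu.depth) t1.depth
  have h3 := le_max_left t0.depth tu.depth
  have h4 := le_max_right t0.depth tu.depth
  rcases v with _ | b
  · show tu.depth + 1 ≤ _
    simp only [TTree.depth]; omega
  · cases b
    · show t0.depth + 1 ≤ _
      simp only [TTree.depth]; omega
    · show t1.depth + 1 ≤ _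
      simp only [TTree.depth]; omega

lemma lower_main (n k : ℕ) (T : TTree (MUXIdx n)) :
    ∀ p : MUXIdx n → Option (Option Bool), Inv k p →
      (∀ x, Consistent x p → uCount x ≤ k → T.eval x = hfext (MUX n) x) →
      n + 2 ^ min k n ≤ certSize p + T.depth := by
  induction T with
  | leaf c =>
    intro p hInv hcor
    obtain ⟨h1, h2, h3, h4⟩ := hInv
    rcases h4 with ⟨⟨aw, hwP, hwu⟩, hAF⟩ | ⟨a₀, haP, haT, hrest⟩
    · -- case (i): always contradictory at a leaf
      exfalso
      have hwP' := mem_PP.mp hwP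
      have hYc : Consistent (cmpl p aw) p := cmpl_cons p aw
      have hXc : Consistent (Function.update (cmpl p aw) (Sum.inr aw) (some true)) p := by
        intro i v hv
        have hne : i ≠ Sum.inr aw := by rintro rfl; rw [hwu] at hv; exact nomatch hv
        rw [Function.update_of_ne hne]
        exact hYc i v hv
      have hYu : uCount (cmpl p aw) ≤ k := by
        rw [uCount_eq_selU p _ (fun j => cmpl_inl_none_iff p aw j)
          (fun a => cmpl_inr_ne_none p aw a h3)]
        exact le_trans h1 (min_le_left _ _)
      have hXu : uCount (Function.update (cmpl p aw) (Sum.inr aw) (some true)) ≤ k := by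
        rw [uCount_eq_selU p _ ?hh1 ?hh2]
        · exact le_trans h1 (min_le_left _ _)
        case hh1 =>
          intro j
          rw [Function.update_of_ne (by simp)]
          exact cmpl_inl_none_iff p aw j
        case hh2 =>
          intro a
          by_cases ha : a = aw
          · subst ha; rw [Function.update_self]; simp
          · rw [Function.update_of_ne (by simp [ha])]
            exact cmpl_inr_ne_none p aw a h3
      have hCSY : CS (cmpl p aw) aw := cmpl_CS p aw hwP'
      have hYf : hfext (MUX n) (cmpl p aw) = some false := by
        refine hf_false ?_ aw hCSY
        intro a hCSa
        have haPP : a ∈ PP p := mem_PP.mpr fun j b hb => hCSa j b (by rw [cmpl_inl, hb]; rfl)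
        rcases hp : p (Sum.inr a) with _ | v
        · rw [cmpl_inr, hp]; rfl
        · rw [cmpl_inr, hp, Option.getD_some, hAF a haPP v hp]
      have hCSX : CS (Function.update (cmpl p aw) (Sum.inr aw) (some true)) aw := by
        intro j b hb
        rw [Function.update_of_ne (by simp)] at hb
        exact hCSY j b hb
      have hXf : hfext (MUX n) (Function.update (cmpl p aw) (Sum.inr aw) (some true))
          ≠ some false :=
        hf_ne_false aw hCSX (by rw [Function.update_self])
      have e1 := hcor _ hYc hYu
      have e2 := hcor _ hXc hXu
      apply hXf
      calc hfext (MUX n) (Function.update (cmpl p aw) (Sum.inr aw) (some true))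
          = c := by rw [← e2]; rfl
        _ = some false := by rw [← hYf, ← e1]; rfl
    · -- case (ii)
      have haP' := mem_PP.mp haP
      by_cases hsel : ∀ j : Fin n, p (Sum.inl j) ≠ none
      · -- all selectors assigned: counting
        have hPP : PP p = Finset.univ.filter fun a : Fin n → Bool =>
            ∀ j b, (p (Sum.inl j)).bind id = some b → a j = b := by
          ext a
          simp only [PP, Finset.mem_filter, Finset.mem_univ, true_and]
          constructor
          · intro h j b hb
            rcases hp : p (Sum.inl j) with _ | v
            · simp [hp] at hb
            · rcases v with _ | cc
              · simp [hp] at hb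
              · have hcb : cc = b := by simpa [hp] using hb
                exact h j b (by rw [hp, hcb])
          · intro h j b hb
            exact h j b (by simp [hb])
        have hPcard : (PP p).card = 2 ^ (selU p).card := by
          rw [hPP, card_cone]
          apply congrArg (fun t => 2 ^ t)
          apply congrArg Finset.card
          ext j
          simp only [Finset.mem_filter, Finset.mem_univ, true_and, selU]
          rcases hp : p (Sum.inl j) with _ | v
          · exact absurd hp (hsel j)
          · rcases v with _ | cc <;> simp [hp]
        have hscard : (selU p).card = min k n := by
          by_cases hb : ∃ j b, p (Sum.inl j) = some (some b)
          · exact h2 hb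
          · have hu : selU p = Finset.univ := by
              ext j
              simp only [selU, Finset.mem_filter, Finset.mem_univ, true_and, iff_true]
              rcases hp : p (Sum.inl j) with _ | v
              · exact absurd hp (hsel j)
              · rcases v with _ | cc
                · rfl
                · exact absurd ⟨j, cc, hp⟩ hb
            have hn' : (selU p).card = n := by rw [hu]; simp
            have hmn := min_le_right k n
            omega
        have hsub : ((Finset.univ : Finset (Fin n)).map ⟨Sum.inl, Sum.inl_injective⟩ ∪
            (PP p).map ⟨Sum.inr, Sum.inr_injective⟩) ⊆
              Finset.univ.filter fun i : MUXIdx n => p i ≠ none := by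
          intro i hi
          simp only [Finset.mem_union, Finset.mem_map, Function.Embedding.coeFn_mk] at hi
          simp only [Finset.mem_filter, Finset.mem_univ, true_and]
          rcases hi with ⟨j, _, rfl⟩ | ⟨a, haPP, rfl⟩
          · exact hsel j
          · by_cases ha : a = a₀
            · subst ha; rw [haT]; simp
            · rw [hrest a haPP ha]; simp
        have hdisj : Disjoint ((Finset.univ : Finset (Fin n)).map ⟨Sum.inl, Sum.inl_injective⟩)
            ((PP p).map ⟨Sum.inr (α := Fin n), Sum.inr_injective⟩) := by
          rw [Finset.disjoint_left]
          rintro i hi1 hi2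
          simp only [Finset.mem_map, Function.Embedding.coeFn_mk] at hi1 hi2
          obtain ⟨j, _, rfl⟩ := hi1
          obtain ⟨a, _, hiq⟩ := hi2
          exact nomatch hiq
        have hcard := Finset.card_le_card hsub
        rw [Finset.card_union_of_disjoint hdisj, Finset.card_map, Finset.card_map] at hcard
        have hcu : (Finset.univ : Finset (Fin n)).card = n := by simp
        rw [hcu, hPcard, hscard] at hcard
        have hdl : (TTree.leaf c : TTree (MUXIdx n)).depth = 0 := rfl
        unfold certSize
        omega
      · -- some selector unassigned: contradiction
        exfalso
        push_neg at hsel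
        obtain ⟨j₀, hj₀⟩ := hsel
        have hYc : Consistent (cmpl p a₀) p := cmpl_cons p a₀
        have hXc : Consistent (Function.update (cmpl p a₀) (Sum.inl j₀) (some (!a₀ j₀))) p := by
          intro i v hv
          have hne : i ≠ Sum.inl j₀ := by rintro rfl; rw [hj₀] at hv; exact nomatch hv
          rw [Function.update_of_ne hne]
          exact hYc i v hv
        have hYu : uCount (cmpl p a₀) ≤ k := by
          rw [uCount_eq_selU p _ (fun j => cmpl_inl_none_iff p a₀ j)
            (fun a => cmpl_inr_ne_none p a₀ a h3)]
          exact le_trans h1 (min_le_left _ _)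
        have hXu : uCount (Function.update (cmpl p a₀) (Sum.inl j₀) (some (!a₀ j₀))) ≤ k := by
          rw [uCount_eq_selU p _ ?hh1 ?hh2]
          · exact le_trans h1 (min_le_left _ _)
          case hh1 =>
            intro j
            by_cases hj : j = j₀
            · subst hj
              rw [Function.update_self]
              simp [hj₀]
            · rw [Function.update_of_ne (show (Sum.inl j : MUXIdx n) ≠ Sum.inl j₀ by simp [hj])]
              exact cmpl_inl_none_iff p a₀ j
          case hh2 =>
            intro a
            rw [Function.update_of_ne (by simp)]
            exact cmpl_inr_ne_none p a₀ a h3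
        have hCSY : CS (cmpl p a₀) a₀ := cmpl_CS p a₀ haP'
        have hYf : hfext (MUX n) (cmpl p a₀) ≠ some false :=
          hf_ne_false a₀ hCSY (by rw [cmpl_inr, haT]; rfl)
        have hXf : hfext (MUX n) (Function.update (cmpl p a₀) (Sum.inl j₀) (some (!a₀ j₀)))
            = some false := by
          refine hf_false ?_ (Function.update a₀ j₀ (!a₀ j₀)) ?_
          · intro a hCSa
            have haPP : a ∈ PP p := by
              refine mem_PP.mpr fun j b hb => hCSa j b ?_
              have hjj : j ≠ j₀ := by rintro rfl; rw [hj₀] at hb; exact nomatch hb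
              rw [Function.update_of_ne (show (Sum.inl j : MUXIdx n) ≠ Sum.inl j₀ by simp [hjj]),
                cmpl_inl, hb]
              rfl
            have haj : a j₀ = !a₀ j₀ := hCSa j₀ _ (by rw [Function.update_self])
            have hane : a ≠ a₀ := by
              intro h; rw [h] at haj; simp at haj
            rw [Function.update_of_ne (by simp), cmpl_inr, hrest a haPP hane]
            rfl
          · intro j b hb
            by_cases hj : j = j₀
            · subst hj
              rw [Function.update_self] at hb
              rw [Function.update_self]
              exact Option.some_injective _ hb
            · rw [Function.update_of_ne (show (Sum.inl j : MUXIdx n) ≠ Sum.inl j₀ by simp [hj])] at hb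
              rw [Function.update_of_ne hj]
              exact cmpl_CS p a₀ haP' j b hb
        have e1 := hcor _ hYc hYu
        have e2 := hcor _ hXc hXu
        apply hYf
        calc hfext (MUX n) (cmpl p a₀) = c := by rw [← e1]; rfl
          _ = some false := by rw [← hXf, ← e2]; rfl
  | node i t0 tu t1 ih0 ihu ih1 =>
    intro p hInv hcor
    have IH : ∀ v : Option Bool, ∀ p' : MUXIdx n → Option (Option Bool), Inv k p' →
        (∀ x, Consistent x p' → uCount x ≤ k →
          (match v with | some false => t0 | none => tu | some true => t1).eval x
            = hfext (MUX n) x) →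
        n + 2 ^ min k n ≤ certSize p' +
          (match v with | some false => t0 | none => tu | some true => t1).depth := by
      intro v
      rcases v with _ | b
      · exact ihu
      · cases b
        · exact ih0
        · exact ih1
    by_cases hp : p i = none
    · obtain ⟨h1, h2, h3, h4⟩ := hInv
      have step : ∀ v : Option Bool, Inv k (Function.update p i (some v)) →
          n + 2 ^ min k n ≤ certSize p + (TTree.node i t0 tu t1).depth := by
        intro v hInv'
        have hcor' : ∀ x, Consistent x (Function.update p i (some v)) → uCount x ≤ k →
            (match v with | some false => t0 | none => tu | some true => t1).eval x
              = hfext (MUX n) x := by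
          intro x hc hu
          have hcp : Consistent x p := by
            intro i' w hw
            by_cases hi : i' = i
            · subst hi; rw [hp] at hw; exact nomatch hw
            · exact hc i' w (by rw [Function.update_of_ne hi]; exact hw)
          have hx : x i = v := hc i v (by rw [Function.update_self])
          rw [← hcor x hcp hu, eval_node_cons hx]
        have hih := IH v _ hInv' hcor'
        rw [certSize_update p i hp v] at hih
        have hdc := depth_child_le i t0 tu t1 v
        omega
      cases i with
      | inl j =>
        have hdatl : ∀ w : Option Bool, ∀ a : Fin n → Bool,
            Function.update p (Sum.inl j) (some w) (Sum.inr a) = p (Sum.inr a) :=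
          fun w a => Function.update_of_ne (by simp) _ _
        by_cases hm : (selU p).card < min k n
        · -- answer u
          apply step none
          refine ⟨?_, ?_, ?_, ?_⟩
          · rw [selU_update_inl_u p j hp,
              Finset.card_insert_of_notMem (by simp [selU, hp])]
            omega
          · rintro ⟨j', b, hb⟩
            by_cases hj : j' = j
            · subst hj; rw [Function.update_self] at hb; simp at hb
            · rw [Function.update_of_ne
                (show (Sum.inl j' : MUXIdx n) ≠ Sum.inl j by simp [hj])] at hb
              have := h2 ⟨j', b, hb⟩
              omega
          · intro a v hv
            rw [hdatl] at hv
            exact h3 a v hv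
          · rw [PP_update_inl_u p j hp]
            simp only [hdatl]
            exact h4
        · have hcm : (selU p).card = min k n := le_antisymm h1 (not_lt.mp hm)
          rcases h4 with ⟨⟨aw, hwP, hwu⟩, hAF⟩ | ⟨a₀, haP, haT, hrest⟩
          · -- answer the witness' bit
            apply step (some (aw j))
            refine ⟨?_, ?_, ?_, ?_⟩
            · rw [selU_update_inl_bool p j hp (aw j)]; exact h1
            · intro _; rw [selU_update_inl_bool p j hp (aw j)]; exact hcm
            · intro a v hv
              rw [hdatl] at hv
              exact h3 a v hv
            · left
              constructor
              · exact ⟨aw, (mem_PP_update_inl_bool p j hp (aw j) aw).mpr ⟨hwP, rfl⟩,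
                  by rw [hdatl]; exact hwu⟩
              · intro a ha v hv
                rw [hdatl] at hv
                exact hAF a ((mem_PP_update_inl_bool p j hp (aw j) a).mp ha).1 v hv
          · apply step (some (a₀ j))
            refine ⟨?_, ?_, ?_, ?_⟩
            · rw [selU_update_inl_bool p j hp (a₀ j)]; exact h1
            · intro _; rw [selU_update_inl_bool p j hp (a₀ j)]; exact hcm
            · intro a v hv
              rw [hdatl] at hv
              exact h3 a v hv
            · right
              refine ⟨a₀, (mem_PP_update_inl_bool p j hp (a₀ j) a₀).mpr ⟨haP, rfl⟩,
                by rw [hdatl]; exact haT, ?_⟩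
              intro a ha hne
              rw [hdatl]
              exact hrest a ((mem_PP_update_inl_bool p j hp (a₀ j) a).mp ha).1 hne
      | inr a =>
        have hseleq : ∀ w : Option Bool,
            selU (Function.update p (Sum.inr a) (some w)) = selU p :=
          fun w => selU_update_inr p a (some w)
        have hdats : ∀ w : Option Bool, ∀ j : Fin n,
            Function.update p (Sum.inr a) (some w) (Sum.inl j) = p (Sum.inl j) :=
          fun w j => Function.update_of_ne (by simp) _ _
        have hPPeq : ∀ w : Option Bool,
            PP (Function.update p (Sum.inr a) (some w)) = PP p :=
          fun w => PP_update_inr p a (some w)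
        have base12 : ∀ w : Option Bool,
            (selU (Function.update p (Sum.inr a) (some w))).card ≤ min k n ∧
            ((∃ j b, Function.update p (Sum.inr a) (some w) (Sum.inl j) = some (some b)) →
              (selU (Function.update p (Sum.inr a) (some w))).card = min k n) := by
          intro w
          constructor
          · rw [hseleq]; exact h1
          · rw [hseleq]
            simp only [hdats]
            exact h2
        have base3 : ∀ b : Bool, ∀ a' : Fin n → Bool, ∀ v : Option Bool,
            Function.update p (Sum.inr a) (some (some b)) (Sum.inr a') = some v →
            v ≠ none := by
          intro b a' v hv
          by_cases ha : a' = a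
          · subst ha
            rw [Function.update_self] at hv
            have := Option.some_injective _ hv
            rw [← this]; simp
          · rw [Function.update_of_ne (by simp [ha])] at hv
            exact h3 a' v hv
        rcases h4 with ⟨⟨aw, hwP, hwu⟩, hAF⟩ | ⟨a₀, haP, haT, hrest⟩
        · by_cases hlast : ∃ a' ∈ PP p, a' ≠ a ∧ p (Sum.inr a') = none
          · -- answer false, case (i) preserved
            obtain ⟨a', ha'P, ha'ne, ha'u⟩ := hlast
            apply step (some false)
            refine ⟨(base12 (some false)).1, (base12 (some false)).2, base3 false, ?_⟩
            left
            constructor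
            · exact ⟨a', (hPPeq (some false)) ▸ ha'P,
                by rw [Function.update_of_ne (by simp [ha'ne])]; exact ha'u⟩
            · intro a'' ha'' v hv
              by_cases he : a'' = a
              · subst he
                rw [Function.update_self] at hv
                exact (Option.some_injective _ hv).symm
              · rw [Function.update_of_ne (by simp [he])] at hv
                exact hAF a'' ((hPPeq (some false)) ▸ ha'') v hv
          · by_cases haPP : a ∈ PP p
            · -- a is the last unassigned element of PP: answer true
              apply step (some true)
              refine ⟨(base12 (some true)).1, (base12 (some true)).2, base3 true, ?_⟩
              right
              refine ⟨a, (hPPeq (some true)) ▸ haPP, by rw [Function.update_self], ?_⟩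
              intro a'' ha'' hne
              have ha''P : a'' ∈ PP p := (hPPeq (some true)) ▸ ha''
              have hne' : p (Sum.inr a'') ≠ none := by
                intro hnone
                exact hlast ⟨a'', ha''P, hne, hnone⟩
              rcases hv' : p (Sum.inr a'') with _ | v
              · exact absurd hv' hne'
              · have := hAF a'' ha''P v hv'
                rw [Function.update_of_ne (by simp [hne]), hv', this]
            · -- a outside PP: answer false
              apply step (some false)
              refine ⟨(base12 (some false)).1, (base12 (some false)).2, base3 false, ?_⟩
              left
              have hwne : aw ≠ a := by rintro rfl; exact haPP hwP
              constructor
              · exact ⟨aw, (hPPeq (some false)) ▸ hwP,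
                  by rw [Function.update_of_ne (by simp [hwne])]; exact hwu⟩
              · intro a'' ha'' v hv
                have ha''P : a'' ∈ PP p := (hPPeq (some false)) ▸ ha''
                have he : a'' ≠ a := by rintro rfl; exact haPP ha''P
                rw [Function.update_of_ne (by simp [he])] at hv
                exact hAF a'' ha''P v hv
        · -- case (ii): a cannot be in PP
          have haPP : a ∉ PP p := by
            intro h
            by_cases he : a = a₀
            · subst he; rw [haT] at hp; exact nomatch hp
            · rw [hrest a h he] at hp; exact nomatch hp
          apply step (some false)
          refine ⟨(base12 (some false)).1, (base12 (some false)).2, base3 false, ?_⟩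
          right
          have hane : a₀ ≠ a := by rintro rfl; exact haPP haP
          refine ⟨a₀, (hPPeq (some false)) ▸ haP,
            by rw [Function.update_of_ne (by simp [hane])]; exact haT, ?_⟩
          intro a'' ha'' hne
          have ha''P : a'' ∈ PP p := (hPPeq (some false)) ▸ ha''
          have he : a'' ≠ a := by rintro rfl; exact haPP ha''P
          rw [Function.update_of_ne (by simp [he])]
          exact hrest a'' ha''P hne
    · -- already assigned coordinate: recurse with the same state
      rcases hpv : p i with _ | v
      · exact absurd hpv hp
      · have hcor' : ∀ x, Consistent x p → uCount x ≤ k →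
            (match v with | some false => t0 | none => tu | some true => t1).eval x
              = hfext (MUX n) x := by
          intro x hc hu
          rw [← hcor x hc hu, eval_node_cons (hc i v hpv)]
        have hih := IH v p hInv hcor'
        have hdc := depth_child_le i t0 tu t1 v
        omega

end Stmt10Aux

/-- Optimal depth for computing the hazard-free extension of `MUX_n` on inputs
with at most `k` uncertain coordinates is exactly `min (2^k + n) (2^n + n)`. -/
theorem stmt10 (n : ℕ) (hn : 1 ≤ n) (k : ℕ) (hk : k ≤ 2^n + n) :
    (∀ T : TTree (MUXIdx n),
        (∀ x : MUXIdx n → Option Bool, uCount x ≤ k → T.eval x = hfext (MUX n) x) →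
        min (2^k + n) (2^n + n) ≤ T.depth) ∧
    (∃ T : TTree (MUXIdx n),
        (∀ x : MUXIdx n → Option Bool, uCount x ≤ k → T.eval x = hfext (MUX n) x) ∧
        T.depth = min (2^k + n) (2^n + n)) := by
  have hmin := Stmt10Aux.min_pow n k
  constructor
  · intro T hT
    rw [hmin]
    have hInit : Stmt10Aux.Inv k (fun _ : MUXIdx n => (none : Option (Option Bool))) := by
      refine ⟨?_, ?_, ?_, Or.inl ⟨⟨fun _ => false, ?_, rfl⟩, ?_⟩⟩
      · have he : Stmt10Aux.selU (fun _ : MUXIdx n => (none : Option (Option Bool))) = ∅ := by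
          ext j; simp [Stmt10Aux.selU]
        rw [he]; simp
      · rintro ⟨j, b, hb⟩; exact nomatch hb
      · intro a v hv; exact nomatch hv
      · exact Stmt10Aux.mem_PP.mpr fun j b hb => nomatch hb
      · intro a _ v hv; exact nomatch hv
    have hcs : certSize (fun _ : MUXIdx n => (none : Option (Option Bool))) = 0 := by
      unfold certSize
      have he : (Finset.univ.filter fun i : MUXIdx n =>
          (fun _ : MUXIdx n => (none : Option (Option Bool))) i ≠ none) = ∅ := by
        ext i; simp
      rw [he]; simp
    have hl := Stmt10Aux.lower_main n k T (fun _ => none) hInit (fun x _ hu => hT x hu)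
    rw [hcs] at hl
    omega
  · refine ⟨Stmt10Aux.UT n k, fun x hx => Stmt10Aux.UT_correct n k x hx, ?_⟩
    rw [hmin, Stmt10Aux.UT_depth]
    omega
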